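/- Let G be the circuit of pairwise disjoint connected graphs G₁, …, G_n (n ≥ 3) with respect to vertices x_i ∈ V(G_i), formed by adding the cycle edges x_1x_2, …, x_{n−1}x_n, x_nx_1 to the disjoint union. Then γ_st(G) ≤ (Σ_{i=1}^{n} γ_st(G_i)) + ⌊n/2⌋. -/

import Mathlib

open SimpleGraph

/-- The degree of a vertex `v` in the graph `G`. -/
noncomputable def deg {V : Type*} (G : SimpleGraph V) (v : V) : ℕ :=
  (G.neighborSet v).ncard

/-- `D` is a strong dominating set of `G`: every vertex outside `D` has a neighbor in `D`
of at least its own degree. -/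
def IsSDS {V : Type*} (G : SimpleGraph V) (D : Set V) : Prop :=
  ∀ x ∉ D, ∃ y ∈ D, G.Adj x y ∧ deg G x ≤ deg G y

/-- The strong domination number of `G`. -/
noncomputable def gammaSt {V : Type*} (G : SimpleGraph V) : ℕ :=
  sInf {n | ∃ D : Set V, IsSDS G D ∧ D.ncard = n}

/-- The circuit of the graphs `G i` with respect to the vertices `x i`: the disjoint union
of the `G i` together with the cycle edges `(x 0)(x 1), …, (x (n-1))(x 0)`. -/
def circuitGraph {n : ℕ} {V : Fin n → Type*} (G : ∀ i, SimpleGraph (V i)) (x : ∀ i, V i) :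
    SimpleGraph (Σ i, V i) :=
  SimpleGraph.fromRel (fun a b =>
    (∃ (i : Fin n) (p q : V i), a = ⟨i, p⟩ ∧ b = ⟨i, q⟩ ∧ (G i).Adj p q) ∨
    (∃ (i j : Fin n), ((j : ℕ) = (i : ℕ) + 1 ∨ ((i : ℕ) = n - 1 ∧ (j : ℕ) = 0)) ∧
      a = ⟨i, x i⟩ ∧ b = ⟨j, x j⟩))

section Aux

set_option linter.unusedSectionVars false

/-! ### Auxiliary counting lemmas -/

lemma ncard_biUnion_le' {ι α : Type*} (f : ι → Set α) (s : Finset ι) :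
    (⋃ i ∈ s, f i).ncard ≤ ∑ i ∈ s, (f i).ncard := by
  classical
  induction s using Finset.induction with
  | empty => simp
  | insert a s' h ih =>
      rw [Finset.set_biUnion_insert, Finset.sum_insert h]
      exact (Set.ncard_union_le _ _).trans (Nat.add_le_add_left ih _)

lemma ncard_iUnion_le' {ι α : Type*} [Fintype ι] (f : ι → Set α) :
    (⋃ i, f i).ncard ≤ ∑ i, (f i).ncard := by
  have h : (⋃ i, f i) = ⋃ i ∈ Finset.univ, f i := by simp
  rw [h]
  exact ncard_biUnion_le' f Finset.univ

/-! ### Arithmetic in `Fin (m+3)` -/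

variable {m : ℕ}

lemma val_add_one' (a : Fin (m+3)) :
    ((a+1 : Fin (m+3)) : ℕ) = if (a:ℕ) = m+2 then 0 else (a:ℕ)+1 := by
  rw [Fin.val_add_one]
  by_cases h : a = Fin.last (m+2)
  · simp [h, Fin.val_last]
  · have h' : (a:ℕ) ≠ m+2 := fun hh => h (Fin.ext (by simp [Fin.val_last, hh]))
    simp [h, h']

lemma fin_add_one_ne (a : Fin (m+3)) : a + 1 ≠ a := by
  rw [Ne, Fin.ext_iff, val_add_one']
  have h := a.isLt
  split_ifs <;> omega

lemma fin_add_two_ne (a : Fin (m+3)) : a + 1 + 1 ≠ a := by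
  rw [Ne, Fin.ext_iff, val_add_one' (a+1), val_add_one' a]
  have h := a.isLt
  split_ifs <;> omega

lemma fin_sub_one_ne (a : Fin (m+3)) : a - 1 ≠ a := by
  intro h
  exact fin_add_one_ne (a - 1) (by rw [sub_add_cancel, h])

lemma fin_add_one_ne_sub_one (a : Fin (m+3)) : a + 1 ≠ a - 1 := by
  intro h
  apply fin_add_two_ne a
  rw [h, sub_add_cancel]

lemma cyc_iff (i j : Fin (m+3)) :
    ((j : ℕ) = (i : ℕ) + 1 ∨ ((i : ℕ) = (m+3) - 1 ∧ (j : ℕ) = 0)) ↔ j = i + 1 := by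
  rw [Fin.ext_iff, val_add_one']
  have hi := i.isLt
  have hj := j.isLt
  split_ifs <;> omega

/-! ### A strong dominating set of a weighted cycle of size at most `⌊n/2⌋` -/

open Fin.NatCast Fin.CommRing in
lemma comb (w : Fin (m+3) → ℕ) :
    ∃ S : Finset (Fin (m+3)), S.card ≤ (m+3)/2 ∧
      ∀ i ∉ S, ∃ j ∈ S, (j = i + 1 ∨ i = j + 1) ∧ w i ≤ w j := by
  obtain ⟨M, -, hM⟩ := Finset.exists_max_image (Finset.univ : Finset (Fin (m+3))) w
    ⟨0, Finset.mem_univ 0⟩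
  set pick : ℕ → Fin (m+3) := fun k =>
    if w (M + ((2*k : ℕ) : Fin (m+3))) ≤ w (M + ((2*k+1 : ℕ) : Fin (m+3)))
    then M + ((2*k+1 : ℕ) : Fin (m+3)) else M + ((2*k : ℕ) : Fin (m+3)) with hpick
  refine ⟨insert M ((Finset.Icc 1 ((m+1)/2)).image pick), ?_, ?_⟩
  · calc (insert M ((Finset.Icc 1 ((m+1)/2)).image pick)).card
        ≤ ((Finset.Icc 1 ((m+1)/2)).image pick).card + 1 := Finset.card_insert_le _ _
      _ ≤ (Finset.Icc 1 ((m+1)/2)).card + 1 := by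
          gcongr; exact Finset.card_image_le
      _ ≤ (m+3)/2 := by rw [Nat.card_Icc]; omega
  · intro i hi
    obtain ⟨r, hrlt, rfl⟩ : ∃ r : ℕ, r < m + 3 ∧ i = M + (r : Fin (m+3)) := by
      refine ⟨((i - M : Fin (m+3)) : ℕ), (i - M).isLt, ?_⟩
      rw [Fin.cast_val_eq_self]
      ring
    rcases Nat.lt_or_ge r 2 with h2 | h2
    · interval_cases r
      · exfalso; apply hi
        simp only [Nat.cast_zero, add_zero]
        exact Finset.mem_insert_self _ _
      · refine ⟨M, Finset.mem_insert_self _ _, Or.inr (by push_cast; ring),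
          hM _ (Finset.mem_univ _)⟩
    rcases Nat.lt_or_ge r (m+2) with h3 | h3
    · -- `2 ≤ r ≤ m+1` : use the pair containing `r`
      obtain ⟨k, hk1, hk2, hror⟩ : ∃ k, 1 ≤ k ∧ k ≤ (m+1)/2 ∧ (r = 2*k ∨ r = 2*k+1) :=
        ⟨r/2, by omega, by omega, by omega⟩
      have hkmem : k ∈ Finset.Icc 1 ((m+1)/2) := Finset.mem_Icc.mpr ⟨hk1, hk2⟩
      have hpmem : pick k ∈ insert M ((Finset.Icc 1 ((m+1)/2)).image pick) :=
        Finset.mem_insert_of_mem (Finset.mem_image_of_mem pick hkmem)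
      by_cases hc : w (M + ((2*k : ℕ) : Fin (m+3))) ≤ w (M + ((2*k+1 : ℕ) : Fin (m+3)))
      · have hpe : pick k = M + ((2*k+1 : ℕ) : Fin (m+3)) := if_pos hc
        rcases hror with rfl | rfl
        · refine ⟨pick k, hpmem, Or.inl ?_, ?_⟩
          · rw [hpe]; push_cast; ring
          · rw [hpe]; exact hc
        · exfalso; apply hi; rw [← hpe]; exact hpmem
      · have hpe : pick k = M + ((2*k : ℕ) : Fin (m+3)) := if_neg hc
        rcases hror with rfl | rfl
        · exfalso; apply hi; rw [← hpe]; exact hpmem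
        · refine ⟨pick k, hpmem, Or.inr ?_, ?_⟩
          · rw [hpe]; push_cast; ring
          · rw [hpe]; omega
    · -- `r = m+2` : the vertex just before the maximum
      have : r = m + 2 := by omega
      subst this
      refine ⟨M, Finset.mem_insert_self _ _, Or.inl ?_, hM _ (Finset.mem_univ _)⟩
      have h0 : ((m+2 : ℕ) : Fin (m+3)) + 1 = 0 := by
        calc ((m+2:ℕ):Fin (m+3)) + 1 = ((m+3:ℕ):Fin (m+3)) := by push_cast; ring
        _ = 0 := Fin.natCast_self _
      rw [add_assoc, h0, add_zero]

/-! ### Adjacency and degrees in the circuit -/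

variable {V : Fin (m+3) → Type*} (G : ∀ i, SimpleGraph (V i)) (x : ∀ i, V i)

lemma circuit_adj (i : Fin (m+3)) (p : V i) (b : Σ j, V j) :
    (circuitGraph G x).Adj ⟨i, p⟩ b ↔
      (∃ q, (G i).Adj p q ∧ b = ⟨i, q⟩) ∨
      (p = x i ∧ (b = ⟨i + 1, x (i + 1)⟩ ∨ b = ⟨i - 1, x (i - 1)⟩)) := by
  rw [circuitGraph, SimpleGraph.fromRel_adj]
  constructor
  · rintro ⟨hne, (⟨i', p', q', hap, hb, hadj⟩ | ⟨i', j', hcyc, hap, hb⟩) |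
      (⟨i', p', q', hb, hap, hadj⟩ | ⟨i', j', hcyc, hb, hap⟩)⟩
    · obtain ⟨rfl, hp⟩ := Sigma.mk.inj_iff.mp hap
      obtain rfl := eq_of_heq hp
      exact Or.inl ⟨q', hadj, hb⟩
    · obtain ⟨rfl, hp⟩ := Sigma.mk.inj_iff.mp hap
      obtain rfl := eq_of_heq hp
      rw [cyc_iff] at hcyc
      exact Or.inr ⟨rfl, Or.inl (by rw [hb, hcyc])⟩
    · obtain ⟨rfl, hp⟩ := Sigma.mk.inj_iff.mp hap
      obtain rfl := eq_of_heq hp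
      exact Or.inl ⟨p', hadj.symm, hb⟩
    · obtain ⟨rfl, hp⟩ := Sigma.mk.inj_iff.mp hap
      obtain rfl := eq_of_heq hp
      rw [cyc_iff] at hcyc
      have : i' = i - 1 := by rw [eq_sub_iff_add_eq, ← hcyc]
      exact Or.inr ⟨rfl, Or.inr (by rw [hb, this])⟩
  · rintro (⟨q, hadj, rfl⟩ | ⟨rfl, (rfl | rfl)⟩)
    · refine ⟨?_, Or.inl (Or.inl ⟨i, p, q, rfl, rfl, hadj⟩)⟩
      intro h
      obtain ⟨-, hp⟩ := Sigma.mk.inj_iff.mp h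
      exact hadj.ne (eq_of_heq hp)
    · refine ⟨?_, Or.inl (Or.inr ⟨i, i+1, (cyc_iff i (i+1)).mpr rfl, rfl, rfl⟩)⟩
      intro h
      obtain ⟨hfst, -⟩ := Sigma.mk.inj_iff.mp h
      exact fin_add_one_ne i hfst.symm
    · refine ⟨?_, Or.inr (Or.inr ⟨i - 1, i, (cyc_iff (i-1) i).mpr (sub_add_cancel i 1).symm,
        rfl, rfl⟩)⟩
      intro h
      obtain ⟨hfst, -⟩ := Sigma.mk.inj_iff.mp h
      exact fin_sub_one_ne i hfst.symm

variable [∀ i, Fintype (V i)]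

lemma deg_circuit_of_ne {i : Fin (m+3)} {p : V i} (hp : p ≠ x i) :
    deg (circuitGraph G x) ⟨i, p⟩ = deg (G i) p := by
  have hset : (circuitGraph G x).neighborSet ⟨i, p⟩ = Sigma.mk i '' (G i).neighborSet p := by
    ext b
    rw [SimpleGraph.mem_neighborSet, circuit_adj]
    simp only [Set.mem_image, SimpleGraph.mem_neighborSet]
    constructor
    · rintro (⟨q, hadj, rfl⟩ | ⟨hpx, -⟩)
      · exact ⟨q, hadj, rfl⟩
      · exact absurd hpx hp
    · rintro ⟨q, hadj, rfl⟩
      exact Or.inl ⟨q, hadj, rfl⟩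
  rw [deg, hset, Set.ncard_image_of_injective _ sigma_mk_injective]
  rfl

lemma deg_circuit_x (i : Fin (m+3)) :
    deg (circuitGraph G x) ⟨i, x i⟩ = deg (G i) (x i) + 2 := by
  have hset : (circuitGraph G x).neighborSet ⟨i, x i⟩ =
      Sigma.mk i '' (G i).neighborSet (x i) ∪
        {(⟨i + 1, x (i+1)⟩ : Σ j, V j), ⟨i - 1, x (i-1)⟩} := by
    ext b
    rw [SimpleGraph.mem_neighborSet, circuit_adj]
    simp only [Set.mem_union, Set.mem_image, SimpleGraph.mem_neighborSet, Set.mem_insert_iff,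
      Set.mem_singleton_iff]
    constructor
    · rintro (⟨q, hadj, rfl⟩ | ⟨-, h⟩)
      · exact Or.inl ⟨q, hadj, rfl⟩
      · exact Or.inr h
    · rintro (⟨q, hadj, rfl⟩ | h)
      · exact Or.inl ⟨q, hadj, rfl⟩
      · exact Or.inr ⟨trivial, h⟩
  have hdisj : Disjoint (Sigma.mk i '' (G i).neighborSet (x i))
      ({(⟨i + 1, x (i+1)⟩ : Σ j, V j), ⟨i - 1, x (i-1)⟩} : Set (Σ j, V j)) := by
    rw [Set.disjoint_left]
    rintro a ⟨q, -, rfl⟩ (h | h)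
    · exact fin_add_one_ne i (congrArg Sigma.fst h).symm
    · exact fin_sub_one_ne i (congrArg Sigma.fst h).symm
  have hpair : ({(⟨i + 1, x (i+1)⟩ : Σ j, V j), ⟨i - 1, x (i-1)⟩} : Set (Σ j, V j)).ncard = 2 := by
    refine Set.ncard_pair ?_
    intro h
    exact fin_add_one_ne_sub_one i (congrArg Sigma.fst h)
  rw [deg, hset, Set.ncard_union_eq hdisj (Set.toFinite _) (Set.toFinite _),
    Set.ncard_image_of_injective _ sigma_mk_injective, hpair]
  rfl

end Aux

/-- Upper bound on the strong domination number of the circuit of `n ≥ 3` pairwise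
disjoint connected graphs. -/
theorem stmt_14 {n : ℕ} (hn : 3 ≤ n) {V : Fin n → Type*} [∀ i, Fintype (V i)]
    (G : ∀ i, SimpleGraph (V i)) (hconn : ∀ i, (G i).Connected) (x : ∀ i, V i) :
    gammaSt (circuitGraph G x) ≤ (∑ i, gammaSt (G i)) + n / 2 := by
  classical
  obtain ⟨m, rfl⟩ : ∃ m, n = m + 3 := ⟨n - 3, by omega⟩
  -- choose a minimum strong dominating set in each component
  have hmin : ∀ i, ∃ D : Set (V i), IsSDS (G i) D ∧ D.ncard = gammaSt (G i) := by
    intro i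
    have hne : {k | ∃ D : Set (V i), IsSDS (G i) D ∧ D.ncard = k}.Nonempty :=
      ⟨(Set.univ : Set (V i)).ncard, Set.univ, fun a ha => absurd (Set.mem_univ a) ha, rfl⟩
    exact Nat.sInf_mem hne
  choose D hD hDcard using hmin
  -- a strong dominating set of the weighted cycle on the `x i`
  obtain ⟨S, hScard, hSdom⟩ := comb (fun i => deg (G i) (x i))
  set T : Set (Σ i, V i) :=
    (⋃ i, Sigma.mk i '' D i) ∪ ((fun j => (⟨j, x j⟩ : Σ i, V i)) '' (S : Set (Fin (m+3)))) with hT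
  have hSDS : IsSDS (circuitGraph G x) T := by
    rintro ⟨i, p⟩ hvp
    have hpD : p ∉ D i := fun h =>
      hvp (Set.mem_union_left _ (Set.mem_iUnion.mpr ⟨i, Set.mem_image_of_mem _ h⟩))
    by_cases hpx : p = x i
    · subst hpx
      have hiS : i ∉ S := fun h =>
        hvp (Set.mem_union_right _ (Set.mem_image_of_mem _ (Finset.mem_coe.mpr h)))
      obtain ⟨j, hjS, hadj, hw⟩ := hSdom i hiS
      refine ⟨⟨j, x j⟩,
        Set.mem_union_right _ (Set.mem_image_of_mem _ (Finset.mem_coe.mpr hjS)), ?_, ?_⟩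
      · rw [circuit_adj]
        rcases hadj with hadj | hadj
        · exact Or.inr ⟨rfl, Or.inl (by rw [hadj])⟩
        · have hj : j = i - 1 := by rw [eq_sub_iff_add_eq, ← hadj]
          exact Or.inr ⟨rfl, Or.inr (by rw [hj])⟩
      · rw [deg_circuit_x, deg_circuit_x]
        omega
    · obtain ⟨y, hyD, hyadj, hydeg⟩ := hD i p hpD
      refine ⟨⟨i, y⟩,
        Set.mem_union_left _ (Set.mem_iUnion.mpr ⟨i, Set.mem_image_of_mem _ hyD⟩), ?_, ?_⟩
      · rw [circuit_adj]
        exact Or.inl ⟨y, hyadj, rfl⟩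
      · rw [deg_circuit_of_ne G x hpx]
        by_cases hyx : y = x i
        · subst hyx
          rw [deg_circuit_x]
          omega
        · rw [deg_circuit_of_ne G x hyx]
          exact hydeg
  have hle : gammaSt (circuitGraph G x) ≤ T.ncard := Nat.sInf_le ⟨T, hSDS, rfl⟩
  refine hle.trans ?_
  have h1 : ((fun j => (⟨j, x j⟩ : Σ i, V i)) '' (S : Set (Fin (m+3)))).ncard = S.card := by
    rw [Set.ncard_image_of_injective _ (fun a b h => congrArg Sigma.fst h), Set.ncard_coe_finset]
  have h2 : (⋃ i, Sigma.mk i '' D i).ncard ≤ ∑ i, gammaSt (G i) := by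
    refine (ncard_iUnion_le' _).trans (le_of_eq (Finset.sum_congr rfl fun i _ => ?_))
    rw [Set.ncard_image_of_injective _ sigma_mk_injective, hDcard]
  calc T.ncard ≤ (⋃ i, Sigma.mk i '' D i).ncard +
      ((fun j => (⟨j, x j⟩ : Σ i, V i)) '' (S : Set (Fin (m+3)))).ncard := Set.ncard_union_le _ _
    _ ≤ (∑ i, gammaSt (G i)) + (m+3)/2 := by rw [h1]; exact Nat.add_le_add h2 hScard
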